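/- arXiv:1111.5925 — 6 statements merged into one kernel-verified Lean document; each statement's English description precedes it below -/
import Mathlib

section
/- Let A be a complex associative algebra equipped with two norms |||·||| and ‖·‖ satisfying ‖a‖ ≤ |||a||| for all a ∈ A and |||a·b||| ≤ ‖a‖·|||b||| for all a, b ∈ A. If A possesses a right approximate identity bounded by K in |||·||| — that is, a net (u_γ) (indexed by a directed set) with |||u_γ||| ≤ K for all γ and |||a·u_γ − a||| → 0 for every a ∈ A — then |||a||| ≤ K·‖a‖ for all a ∈ A; in particular the two norms ‖·‖ and |||·||| are equivalent on A. (This is the key estimate in the implications (c) ⇒ (b) of Propositions 2.3 and 3.6 of the paper, which concern the Lebesgue–Fourier algebra of a hypergroup.) -/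
/-!
STATEMENT 0: Let A be a complex associative algebra equipped with two norms
`N₁ = |||·|||` and `N₂ = ‖·‖` satisfying `N₂ a ≤ N₁ a` for all `a ∈ A` and
`N₁ (a * b) ≤ N₂ a * N₁ b` for all `a, b ∈ A`. If A possesses a right approximate
identity bounded by `K` in `N₁` (a net `u : Γ → A` indexed by a nonempty directed
set with `N₁ (u γ) ≤ K` and `N₁ (a * u γ - a) → 0` for every `a`), then
`N₁ a ≤ K * N₂ a` for all `a ∈ A`; in particular the two norms are equivalent on A.
-/

open Filter

theorem stmt0 {A : Type} [NonUnitalRing A] [Module ℂ A]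
    (N₁ N₂ : A → ℝ)
    -- N₁ is a norm on the complex vector space A
    (hN₁add : ∀ a b : A, N₁ (a + b) ≤ N₁ a + N₁ b)
    (hN₁smul : ∀ (c : ℂ) (a : A), N₁ (c • a) = ‖c‖ * N₁ a)
    (hN₁eq : ∀ a : A, N₁ a = 0 ↔ a = 0)
    -- N₂ is a norm on the complex vector space A
    (hN₂add : ∀ a b : A, N₂ (a + b) ≤ N₂ a + N₂ b)
    (hN₂smul : ∀ (c : ℂ) (a : A), N₂ (c • a) = ‖c‖ * N₂ a)
    (hN₂eq : ∀ a : A, N₂ a = 0 ↔ a = 0)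
    -- the compatibility conditions between the two norms
    (hle : ∀ a : A, N₂ a ≤ N₁ a)
    (hmul : ∀ a b : A, N₁ (a * b) ≤ N₂ a * N₁ b)
    -- a right approximate identity bounded by K in N₁
    (K : ℝ)
    (Γ : Type) [Preorder Γ] [IsDirected Γ (· ≤ ·)] [Nonempty Γ]
    (u : Γ → A)
    (hu_bdd : ∀ γ : Γ, N₁ (u γ) ≤ K)
    (hu_approx : ∀ a : A, Tendsto (fun γ => N₁ (a * u γ - a)) atTop (nhds 0)) :
    ∀ a : A, N₁ a ≤ K * N₂ a := by
  intro a
  -- nonnegativity of norms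
  have hnonneg : ∀ b : A, 0 ≤ N₂ b := by
    intro b
    have h0 : N₂ (0 : A) = 0 := (hN₂eq 0).mpr rfl
    have hneg : N₂ (-b) = N₂ b := by
      have : ((-1 : ℂ) • b) = -b := by simp
      rw [← this, hN₂smul]; simp
    have := hN₂add b (-b)
    rw [hneg] at this
    simp at this
    linarith
  -- key estimate: N₁ a ≤ K * N₂ a + N₁ (a * u γ - a)
  have key : ∀ γ : Γ, N₁ a ≤ K * N₂ a + N₁ (a * u γ - a) := by
    intro γ
    have h1 : N₁ a ≤ N₁ (a * u γ) + N₁ (a - a * u γ) := by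
      have := hN₁add (a * u γ) (a - a * u γ)
      simpa using this
    have h2 : N₁ (a - a * u γ) = N₁ (a * u γ - a) := by
      have : ((-1 : ℂ) • (a * u γ - a)) = a - a * u γ := by simp
      rw [← this, hN₁smul]; simp
    have h3 : N₁ (a * u γ) ≤ N₂ a * N₁ (u γ) := hmul a (u γ)
    have h4 : N₂ a * N₁ (u γ) ≤ N₂ a * K :=
      mul_le_mul_of_nonneg_left (hu_bdd γ) (hnonneg a)
    nlinarith [hnonneg a]
  have htend : Tendsto (fun γ => K * N₂ a + N₁ (a * u γ - a)) atTop (nhds (K * N₂ a)) := by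
    have := (hu_approx a).const_add (K * N₂ a)
    simpa using this
  exact ge_of_tendsto htend (Eventually.of_forall key)
end

section
/- Let B be a complex Banach algebra with norm ‖·‖, and let A be a dense subalgebra of B which is itself a Banach algebra under a norm |||·||| satisfying ‖a‖ ≤ |||a||| for all a ∈ A and |||a·b||| ≤ ‖a‖·|||b||| for all a, b ∈ A. If A has a right approximate identity bounded in |||·||| (a net (u_γ) with sup_γ |||u_γ||| < ∞ and |||a·u_γ − a||| → 0 for every a ∈ A), then the norms ‖·‖ and |||·||| are equivalent on A and A = B. (This is the abstract content of the implication (c) ⇒ (b) in Propositions 2.3 and 3.6 of the paper.) -/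
open Filter

theorem stmt1 {B : Type} [NonUnitalNormedRing B] [NormedSpace ℂ B]
    [IsScalarTower ℂ B B] [SMulCommClass ℂ B B] [CompleteSpace B]
    {A : Type} [NonUnitalNormedRing A] [NormedSpace ℂ A]
    [IsScalarTower ℂ A A] [SMulCommClass ℂ A A] [CompleteSpace A]
    -- A is a dense subalgebra of B
    (ι : A →ₙₐ[ℂ] B) (hinj : Function.Injective ι) (hdense : DenseRange ι)
    -- compatibility of the two norms
    (hle : ∀ a : A, ‖ι a‖ ≤ ‖a‖)
    (hmul : ∀ a b : A, ‖a * b‖ ≤ ‖ι a‖ * ‖b‖)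
    -- a bounded right approximate identity for A in the norm of A
    (Γ : Type) [Preorder Γ] [IsDirected Γ (· ≤ ·)] [Nonempty Γ]
    (u : Γ → A)
    (hu_bdd : ∃ K : ℝ, ∀ γ : Γ, ‖u γ‖ ≤ K)
    (hu_approx : ∀ a : A, Tendsto (fun γ => ‖a * u γ - a‖) atTop (nhds 0)) :
    (∃ C : ℝ, 0 < C ∧ ∀ a : A, ‖a‖ ≤ C * ‖ι a‖) ∧ Function.Surjective ι := by
  obtain ⟨K, hK⟩ := hu_bdd
  have hK0 : 0 ≤ K := le_trans (norm_nonneg _) (hK (Classical.arbitrary Γ))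
  have key : ∀ a : A, ‖a‖ ≤ (K + 1) * ‖ι a‖ := by
    intro a
    have htend : Tendsto (fun γ => a * u γ) atTop (nhds a) := by
      rw [tendsto_iff_norm_sub_tendsto_zero]
      exact hu_approx a
    have h1 : Tendsto (fun γ => ‖a * u γ‖) atTop (nhds ‖a‖) := htend.norm
    have h2 : ∀ γ, ‖a * u γ‖ ≤ K * ‖ι a‖ := fun γ => by
      calc ‖a * u γ‖ ≤ ‖ι a‖ * ‖u γ‖ := hmul a (u γ)
        _ ≤ ‖ι a‖ * K := mul_le_mul_of_nonneg_left (hK γ) (norm_nonneg _)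
        _ = K * ‖ι a‖ := mul_comm _ _
    have := le_of_tendsto h1 (Eventually.of_forall h2)
    nlinarith [norm_nonneg (ι a)]
  refine ⟨⟨K + 1, by linarith, key⟩, ?_⟩
  have hlip : LipschitzWith 1 ι := by
    have := AddMonoidHomClass.lipschitz_of_bound ι 1 (fun a => by simpa using hle a)
    simpa [Real.toNNReal_one] using this
  have hanti : AntilipschitzWith (K + 1).toNNReal ι := by
    have := AddMonoidHomClass.antilipschitz_of_bound (K := (K+1).toNNReal) ι (fun a => by
      simpa [Real.coe_toNNReal _ (by linarith : (0:ℝ) ≤ K + 1)] using key a)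
    exact this
  have hclosed : IsClosed (Set.range ι) :=
    hanti.isClosed_range hlip.uniformContinuous
  have : Set.range ι = Set.univ := hclosed.closure_eq ▸ hdense.closure_range
  exact Set.range_eq_univ.mp this
end

section
/- Let B be a complex Banach algebra with norm ‖·‖ and let φ be a character on B. Let A be a subalgebra of B which is a Banach algebra under a norm |||·|||, is a left ideal of B (b·a ∈ A whenever b ∈ B and a ∈ A), and satisfies |||b·a||| ≤ ‖b‖·|||a||| for all b ∈ B and a ∈ A. Suppose there exists h₀ ∈ A with φ(h₀) = 1. If B is φ-amenable, then A (with the norm |||·|||) is φ|_A-amenable: explicitly, setting h_γ = f_γ·h₀ for a bounded approximate φ-mean (f_γ) of B yields a |||·|||-bounded net in A with φ(h_γ) → 1 and |||h·h_γ − φ(h)·h_γ||| → 0 for every h ∈ A. (This is the forward direction of Theorem 2.5 of the paper, relating α-amenability of a hypergroup to φ_α-amenability of its Lebesgue–Fourier algebra, and it is also the argument proving Corollary 3.9.) -/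
/-!
STATEMENT 2: Let B be a complex Banach algebra with norm `‖·‖` and `φ` a character
on B (a nonzero continuous multiplicative linear functional). Let A be a subalgebra
of B (realized as an injective non-unital algebra homomorphism `ι : A →ₙₐ[ℂ] B`)
which is a Banach algebra under its own norm, is a left ideal of B (realized by a
map `smul : B → A → A` with `ι (smul b a) = b * ι a`), and satisfies
`‖smul b a‖_A ≤ ‖b‖_B * ‖a‖_A`. Suppose `h₀ ∈ A` with `φ (ι h₀) = 1`. If B is
φ-amenable, witnessed by a bounded approximate φ-mean `(f γ)`, then setting
`h γ = f γ · h₀ = smul (f γ) h₀` yields a `|||·|||`-bounded net in A with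
`φ(h γ) → 1` and `|||h * h γ - φ(h) h γ||| → 0` for every `h ∈ A`; i.e. A is
`φ|_A`-amenable.
-/

open Filter

theorem stmt2 {B : Type} [NonUnitalNormedRing B] [NormedSpace ℂ B]
    [IsScalarTower ℂ B B] [SMulCommClass ℂ B B] [CompleteSpace B]
    {A : Type} [NonUnitalNormedRing A] [NormedSpace ℂ A]
    [IsScalarTower ℂ A A] [SMulCommClass ℂ A A] [CompleteSpace A]
    -- A is a subalgebra of B
    (ι : A →ₙₐ[ℂ] B) (hinj : Function.Injective ι)
    -- A is a left ideal of B, with `|||b·a||| ≤ ‖b‖·|||a|||`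
    (smul : B → A → A) (hsmul : ∀ (b : B) (a : A), ι (smul b a) = b * ι a)
    (hsmul_norm : ∀ (b : B) (a : A), ‖smul b a‖ ≤ ‖b‖ * ‖a‖)
    -- φ is a character on B
    (φ : B →ₙₐ[ℂ] ℂ) (hφcont : Continuous φ) (hφne : φ ≠ 0)
    -- an element h₀ of A with φ(h₀) = 1
    (h₀ : A) (hh₀ : φ (ι h₀) = 1)
    -- B is φ-amenable: (f γ) is a bounded approximate φ-mean in B
    (Γ : Type) [Preorder Γ] [IsDirected Γ (· ≤ ·)] [Nonempty Γ]
    (f : Γ → B)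
    (hf_bdd : ∃ K : ℝ, ∀ γ : Γ, ‖f γ‖ ≤ K)
    (hf_one : Tendsto (fun γ => φ (f γ)) atTop (nhds 1))
    (hf_mean : ∀ b : B, Tendsto (fun γ => ‖b * f γ - φ b • f γ‖) atTop (nhds 0)) :
    -- then (h γ) = (smul (f γ) h₀) is a bounded approximate φ|_A-mean in A
    (∃ K : ℝ, ∀ γ : Γ, ‖smul (f γ) h₀‖ ≤ K) ∧
      Tendsto (fun γ => φ (ι (smul (f γ) h₀))) atTop (nhds 1) ∧
      ∀ h : A, Tendsto
        (fun γ => ‖h * smul (f γ) h₀ - φ (ι h) • smul (f γ) h₀‖) atTop (nhds 0) := by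
  obtain ⟨K, hK⟩ := hf_bdd
  have key : ∀ (h : A) (γ : Γ),
      h * smul (f γ) h₀ - φ (ι h) • smul (f γ) h₀
        = smul (ι h * f γ - φ (ι h) • f γ) h₀ := by
    intro h γ
    apply hinj
    simp only [map_sub, map_mul, map_smul, hsmul, sub_mul, smul_mul_assoc, mul_assoc]
  refine ⟨⟨K * ‖h₀‖, fun γ => (hsmul_norm _ _).trans
    (mul_le_mul_of_nonneg_right (hK γ) (norm_nonneg _))⟩, ?_, ?_⟩
  · have : ∀ γ, φ (ι (smul (f γ) h₀)) = φ (f γ) := by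
      intro γ
      rw [hsmul, map_mul, hh₀, mul_one]
    simpa only [this] using hf_one
  · intro h
    have hb := (hf_mean (ι h)).mul_const ‖h₀‖
    rw [zero_mul] at hb
    refine squeeze_zero (fun γ => norm_nonneg _) (fun γ => ?_) hb
    rw [key h γ]
    exact hsmul_norm _ _
end

section
/- Let B be a complex Banach algebra with norm ‖·‖ and let φ be a character on B. Let A be a subalgebra of B which is a Banach algebra under a norm |||·|||, is a left ideal of B (b·a ∈ A whenever b ∈ B and a ∈ A), and satisfies ‖a‖ ≤ |||a||| for all a ∈ A and |||b·a||| ≤ ‖b‖·|||a||| for all b ∈ B and a ∈ A. Suppose there exists h₀ ∈ A with φ(h₀) = 1. If A (with the norm |||·|||) is φ|_A-amenable, then B is φ-amenable: explicitly, setting f_γ = h₀·h_γ for a bounded approximate φ|_A-mean (h_γ) of A yields a ‖·‖-bounded net in B with φ(f_γ) → 1 and ‖b·f_γ − φ(b)·f_γ‖ → 0 for every b ∈ B. (This is the converse direction of Theorem 2.5 of the paper, relating α-amenability of a hypergroup to φ_α-amenability of its Lebesgue–Fourier algebra.) -/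
/-!
STATEMENT 3: Let B be a complex Banach algebra with norm `‖·‖` and `φ` a character
on B. Let A be a subalgebra of B (realized as an injective non-unital algebra
homomorphism `ι : A →ₙₐ[ℂ] B`) which is a Banach algebra under its own norm, is a
left ideal of B (realized by `smul : B → A → A` with `ι (smul b a) = b * ι a`),
and satisfies `‖ι a‖_B ≤ ‖a‖_A` and `‖smul b a‖_A ≤ ‖b‖_B * ‖a‖_A`. Suppose
`h₀ ∈ A` with `φ (ι h₀) = 1`. If A is `φ|_A`-amenable, witnessed by a bounded
approximate `φ|_A`-mean `(h γ)`, then setting `f γ = h₀ · h γ = ι h₀ * ι (h γ)`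
yields a `‖·‖`-bounded net in B with `φ(f γ) → 1` and
`‖b * f γ - φ(b) f γ‖ → 0` for every `b ∈ B`; i.e. B is φ-amenable.
-/

open Filter

theorem stmt3 {B : Type} [NonUnitalNormedRing B] [NormedSpace ℂ B]
    [IsScalarTower ℂ B B] [SMulCommClass ℂ B B] [CompleteSpace B]
    {A : Type} [NonUnitalNormedRing A] [NormedSpace ℂ A]
    [IsScalarTower ℂ A A] [SMulCommClass ℂ A A] [CompleteSpace A]
    -- A is a subalgebra of B
    (ι : A →ₙₐ[ℂ] B) (hinj : Function.Injective ι)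
    -- A is a left ideal of B
    (smul : B → A → A) (hsmul : ∀ (b : B) (a : A), ι (smul b a) = b * ι a)
    -- the norm conditions `‖a‖ ≤ |||a|||` and `|||b·a||| ≤ ‖b‖·|||a|||`
    (hle : ∀ a : A, ‖ι a‖ ≤ ‖a‖)
    (hsmul_norm : ∀ (b : B) (a : A), ‖smul b a‖ ≤ ‖b‖ * ‖a‖)
    -- φ is a character on B
    (φ : B →ₙₐ[ℂ] ℂ) (hφcont : Continuous φ) (hφne : φ ≠ 0)
    -- an element h₀ of A with φ(h₀) = 1
    (h₀ : A) (hh₀ : φ (ι h₀) = 1)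
    -- A is φ|_A-amenable: (h γ) is a bounded approximate φ|_A-mean in A
    (Γ : Type) [Preorder Γ] [IsDirected Γ (· ≤ ·)] [Nonempty Γ]
    (h : Γ → A)
    (hh_bdd : ∃ K : ℝ, ∀ γ : Γ, ‖h γ‖ ≤ K)
    (hh_one : Tendsto (fun γ => φ (ι (h γ))) atTop (nhds 1))
    (hh_mean : ∀ a : A,
      Tendsto (fun γ => ‖a * h γ - φ (ι a) • h γ‖) atTop (nhds 0)) :
    -- then (f γ) = (ι h₀ * ι (h γ)) is a bounded approximate φ-mean in B
    (∃ K : ℝ, ∀ γ : Γ, ‖ι h₀ * ι (h γ)‖ ≤ K) ∧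
      Tendsto (fun γ => φ (ι h₀ * ι (h γ))) atTop (nhds 1) ∧
      ∀ b : B, Tendsto
        (fun γ => ‖b * (ι h₀ * ι (h γ)) - φ b • (ι h₀ * ι (h γ))‖) atTop (nhds 0) := by
  obtain ⟨K, hK⟩ := hh_bdd
  refine ⟨⟨‖ι h₀‖ * K, fun γ => ?_⟩, ?_, ?_⟩
  · calc ‖ι h₀ * ι (h γ)‖ ≤ ‖ι h₀‖ * ‖ι (h γ)‖ := norm_mul_le _ _
      _ ≤ ‖ι h₀‖ * ‖h γ‖ := by
          exact mul_le_mul_of_nonneg_left (hle _) (norm_nonneg _)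
      _ ≤ ‖ι h₀‖ * K := by
          exact mul_le_mul_of_nonneg_left (hK γ) (norm_nonneg _)
  · simpa [map_mul, hh₀] using hh_one
  · intro b
    set a := smul b h₀ with ha
    have hφa : φ (ι a) = φ b := by rw [ha, hsmul, map_mul, hh₀, mul_one]
    have key : ∀ γ, b * (ι h₀ * ι (h γ)) - φ b • (ι h₀ * ι (h γ)) =
        ι (a * h γ - φ (ι a) • h γ) + φ b • (ι (h γ) - ι h₀ * ι (h γ)) := by
      intro γ
      rw [map_sub, map_mul, map_smul, ha, hsmul, map_mul, hh₀, mul_one,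
        smul_sub, ← mul_assoc]
      abel
    have hbound : ∀ γ, ‖b * (ι h₀ * ι (h γ)) - φ b • (ι h₀ * ι (h γ))‖ ≤
        ‖a * h γ - φ (ι a) • h γ‖ + ‖φ b‖ * ‖h₀ * h γ - φ (ι h₀) • h γ‖ := by
      intro γ
      rw [key γ]
      refine le_trans (norm_add_le _ _) (add_le_add ?_ ?_)
      · exact hle _
      · rw [norm_smul]
        refine mul_le_mul_of_nonneg_left ?_ (norm_nonneg _)
        have : ι (h γ) - ι h₀ * ι (h γ) = ι (φ (ι h₀) • h γ - h₀ * h γ) := by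
          rw [map_sub, map_smul, map_mul, hh₀, one_smul]
        rw [this]
        refine le_trans (hle _) ?_
        rw [← norm_neg]
        simp [neg_sub]
    have hlim : Tendsto (fun γ => ‖a * h γ - φ (ι a) • h γ‖ +
        ‖φ b‖ * ‖h₀ * h γ - φ (ι h₀) • h γ‖) atTop (nhds 0) := by
      have := (hh_mean a).add ((hh_mean h₀).const_mul ‖φ b‖)
      simpa using this
    exact squeeze_zero (fun γ => norm_nonneg _) hbound hlim
end

section
/- Let B be a complex Banach algebra with norm ‖·‖, let φ be a character on B, and let A be a subalgebra of B which is a Banach algebra under a norm |||·|||, is a left ideal of B (b·a ∈ A whenever b ∈ B and a ∈ A), and satisfies ‖a‖ ≤ |||a||| for all a ∈ A and |||b·a||| ≤ ‖b‖·|||a||| for all b ∈ B and a ∈ A. Suppose there exists h₀ ∈ A with φ(h₀) = 1. Then A (with the norm |||·|||) is φ|_A-amenable if and only if B is φ-amenable. (This is the abstract form of Theorem 2.5 of the paper: for a commutative hypergroup H and a real-valued hermitian character α, the Lebesgue–Fourier algebra LA(H) is φ_α-amenable if and only if H is α-amenable, the latter being equivalent to φ_α-amenability of L¹(H).) -/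
/-!
STATEMENT 4: Let B be a complex Banach algebra with norm `‖·‖`, `φ` a character on
B, and A a subalgebra of B (realized as an injective non-unital algebra
homomorphism `ι : A →ₙₐ[ℂ] B`) which is a Banach algebra under its own norm, is a
left ideal of B (realized by `smul : B → A → A` with `ι (smul b a) = b * ι a`),
and satisfies `‖ι a‖_B ≤ ‖a‖_A` and `‖smul b a‖_A ≤ ‖b‖_B * ‖a‖_A`. Suppose
`h₀ ∈ A` with `φ (ι h₀) = 1`. Then A is `φ|_A`-amenable if and only if B is
φ-amenable, where a Banach algebra is φ-amenable if it admits a bounded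
approximate φ-mean: a bounded net `(a γ)`, indexed by a nonempty directed set,
with `φ (a γ) → 1` and `‖a * a γ - φ(a) • a γ‖ → 0` for every `a`.
-/

open Filter

/-- A witness to φ-amenability of a (non-unital) normed complex algebra `A`:
a bounded approximate φ-mean, i.e. a bounded net, indexed by a nonempty directed
set, with `φ (u γ) → 1` and `‖a * u γ - φ a • u γ‖ → 0` for all `a`. -/
structure BoundedApproxCharMean {A : Type} [NonUnitalNormedRing A]
    [NormedSpace ℂ A] (φ : A →ₙₐ[ℂ] ℂ) : Type 1 where
  Γ : Type
  [pre : Preorder Γ]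
  [dir : IsDirected Γ (· ≤ ·)]
  [nonempty : Nonempty Γ]
  u : Γ → A
  bounded : ∃ K : ℝ, ∀ γ : Γ, ‖u γ‖ ≤ K
  tendsto_one : Tendsto (fun γ => φ (u γ)) atTop (nhds 1)
  mean : ∀ a : A, Tendsto (fun γ => ‖a * u γ - φ a • u γ‖) atTop (nhds 0)

/-- A (non-unital) normed complex algebra `A` is φ-amenable if it admits a bounded
approximate φ-mean. -/
def CharAmenable {A : Type} [NonUnitalNormedRing A] [NormedSpace ℂ A]
    (φ : A →ₙₐ[ℂ] ℂ) : Prop :=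
  Nonempty (BoundedApproxCharMean φ)

theorem stmt4 {B : Type} [NonUnitalNormedRing B] [NormedSpace ℂ B]
    [IsScalarTower ℂ B B] [SMulCommClass ℂ B B] [CompleteSpace B]
    {A : Type} [NonUnitalNormedRing A] [NormedSpace ℂ A]
    [IsScalarTower ℂ A A] [SMulCommClass ℂ A A] [CompleteSpace A]
    -- A is a subalgebra of B
    (ι : A →ₙₐ[ℂ] B) (hinj : Function.Injective ι)
    -- A is a left ideal of B
    (smul : B → A → A) (hsmul : ∀ (b : B) (a : A), ι (smul b a) = b * ι a)
    -- the norm conditions `‖a‖ ≤ |||a|||` and `|||b·a||| ≤ ‖b‖·|||a|||`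
    (hle : ∀ a : A, ‖ι a‖ ≤ ‖a‖)
    (hsmul_norm : ∀ (b : B) (a : A), ‖smul b a‖ ≤ ‖b‖ * ‖a‖)
    -- φ is a character on B
    (φ : B →ₙₐ[ℂ] ℂ) (hφcont : Continuous φ) (hφne : φ ≠ 0)
    -- an element h₀ of A with φ(h₀) = 1
    (h₀ : A) (hh₀ : φ (ι h₀) = 1) :
    CharAmenable (φ.comp ι) ↔ CharAmenable φ := by
  constructor
  · rintro ⟨m⟩
    letI := m.pre; letI := m.dir; letI := m.nonempty
    refine ⟨⟨m.Γ, fun γ => ι (m.u γ), ?_, ?_, ?_⟩⟩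
    · obtain ⟨K, hK⟩ := m.bounded
      exact ⟨K, fun γ => (hle _).trans (hK γ)⟩
    · exact m.tendsto_one
    · intro b
      set a' : A := smul b h₀ with ha'
      have hφa' : φ (ι a') = φ b := by rw [ha', hsmul, map_mul, hh₀, mul_one]
      have key : ∀ γ, b * ι (m.u γ) - φ b • ι (m.u γ)
          = ι (a' * m.u γ - φ (ι a') • m.u γ)
            - b * ι (h₀ * m.u γ - φ (ι h₀) • m.u γ) := by
        intro γ
        simp only [map_sub, map_mul, map_smul, ha', hsmul, hφa', hh₀, one_smul,
          mul_one]
        rw [mul_sub, mul_assoc]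
        abel
      have hbd : ∀ γ, ‖b * ι (m.u γ) - φ b • ι (m.u γ)‖
          ≤ ‖a' * m.u γ - (φ.comp ι) a' • m.u γ‖
            + ‖b‖ * ‖h₀ * m.u γ - (φ.comp ι) h₀ • m.u γ‖ := by
        intro γ
        rw [key γ]
        refine (norm_sub_le _ _).trans (add_le_add ?_ ?_)
        · exact (hle _).trans_eq rfl
        · exact (norm_mul_le _ _).trans
            (mul_le_mul_of_nonneg_left (hle _) (norm_nonneg b))
      refine squeeze_zero (fun γ => norm_nonneg _) hbd ?_
      simpa using (m.mean a').add ((m.mean h₀).const_mul ‖b‖)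
  · rintro ⟨m⟩
    letI := m.pre; letI := m.dir; letI := m.nonempty
    refine ⟨⟨m.Γ, fun γ => smul (m.u γ) h₀, ?_, ?_, ?_⟩⟩
    · obtain ⟨K, hK⟩ := m.bounded
      exact ⟨K * ‖h₀‖, fun γ => (hsmul_norm _ _).trans
        (mul_le_mul_of_nonneg_right (hK γ) (norm_nonneg h₀))⟩
    · have : ∀ γ, (φ.comp ι) (smul (m.u γ) h₀) = φ (m.u γ) := by
        intro γ
        simp [NonUnitalAlgHom.comp_apply, hsmul, map_mul, hh₀]
      simpa only [this] using m.tendsto_one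
    · intro a
      have key : ∀ γ, a * smul (m.u γ) h₀ - (φ.comp ι) a • smul (m.u γ) h₀
          = smul (ι a * m.u γ - φ (ι a) • m.u γ) h₀ := by
        intro γ
        apply hinj
        simp only [map_sub, map_mul, map_smul, hsmul, NonUnitalAlgHom.comp_apply]
        rw [sub_mul, smul_mul_assoc, mul_assoc]
      have hbd : ∀ γ, ‖a * smul (m.u γ) h₀ - (φ.comp ι) a • smul (m.u γ) h₀‖
          ≤ ‖ι a * m.u γ - φ (ι a) • m.u γ‖ * ‖h₀‖ := by
        intro γ; rw [key γ]; exact hsmul_norm _ _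
      refine squeeze_zero (fun γ => norm_nonneg _) hbd ?_
      simpa using (m.mean (ι a)).mul_const ‖h₀‖
end

section
/- Let G be a locally compact Hausdorff topological group with a left Haar measure μ. If every μ-integrable complex-valued function on G agrees μ-almost everywhere with some continuous function on G vanishing at infinity (i.e., L¹(G, μ) ⊆ C₀(G) in the sense of equivalence classes), then the topology of G is discrete. (This is the group instance of the implication (b) ⇒ (a) in Proposition 2.3 of the paper, where (b) states that the Lebesgue–Fourier algebra LA(H) equals L¹(H).) -/
/-!
STATEMENT 5: Let G be a locally compact Hausdorff topological group with a left
Haar measure μ. If every μ-integrable complex-valued function on G agrees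
μ-almost everywhere with some continuous function on G vanishing at infinity
(i.e. L¹(G, μ) ⊆ C₀(G) as equivalence classes), then the topology of G is
discrete.
-/

open MeasureTheory Set
open scoped ENNReal NNReal

/-- Auxiliary: the `ℝ≥0∞`-valued norm of `a.toReal` is at most `a`. -/
lemma aux_nnnorm_toReal_le (a : ℝ≥0∞) : (‖a.toReal‖₊ : ℝ≥0∞) ≤ a := by
  rw [← enorm_eq_nnnorm, Real.enorm_eq_ofReal ENNReal.toReal_nonneg]
  exact ENNReal.ofReal_toReal_le

theorem stmt5 {G : Type} [Group G] [TopologicalSpace G] [IsTopologicalGroup G]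
    [LocallyCompactSpace G] [T2Space G] [MeasurableSpace G] [BorelSpace G]
    (μ : Measure G) [μ.IsHaarMeasure]
    (h : ∀ f : G → ℂ, Integrable f μ →
      ∃ g : ZeroAtInftyContinuousMap G ℂ, f =ᵐ[μ] ⇑g) :
    DiscreteTopology G := by
  classical
  by_contra hnd
  have h1 : ¬ IsOpen ({1} : Set G) := fun ho =>
    hnd (discreteTopology_iff_isOpen_singleton_one.mpr ho)
  -- every nonempty open set contains two distinct points
  have two_pts : ∀ W : Set G, IsOpen W → W.Nonempty →
      ∃ x ∈ W, ∃ y ∈ W, x ≠ y := by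
    rintro W hW ⟨x, hx⟩
    by_contra hcon
    push_neg at hcon
    have hWx : W = {x} := by
      ext z
      constructor
      · intro hz; exact hcon z hz x hx
      · rintro rfl; exact hx
    apply h1
    have : ({1} : Set G) = (fun z => x * z) ⁻¹' W := by
      ext z
      simp [hWx]
    rw [this]
    exact hW.preimage (continuous_mul_left x)
  -- splitting: every nonempty open set contains a nonempty open subset of at most half measure
  have split : ∀ W : Set G, IsOpen W → W.Nonempty →
      ∃ W', IsOpen W' ∧ W'.Nonempty ∧ W' ⊆ W ∧ μ W' ≤ μ W / 2 := by
    intro W hW hne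
    obtain ⟨x, hx, y, hy, hxy⟩ := two_pts W hW hne
    obtain ⟨U, Vv, hU, hV, hxU, hyV, hUV⟩ := t2_separation hxy.symm
    have h1o : IsOpen (W ∩ U) := hW.inter hU
    have h2o : IsOpen (W ∩ Vv) := hW.inter hV
    have hdisj : Disjoint (W ∩ U) (W ∩ Vv) :=
      hUV.mono inter_subset_right inter_subset_right
    have hsum : μ (W ∩ U) + μ (W ∩ Vv) ≤ μ W := by
      rw [← measure_union hdisj h2o.measurableSet]
      exact measure_mono (union_subset inter_subset_left inter_subset_left)
    rcases le_or_gt (μ (W ∩ U)) (μ W / 2) with hle | hlt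
    · exact ⟨W ∩ U, h1o, ⟨y, hy, hxU⟩, inter_subset_left, hle⟩
    · refine ⟨W ∩ Vv, h2o, ⟨x, hx, hyV⟩, inter_subset_left, ?_⟩
      by_contra hgt
      push_neg at hgt
      have hW2 : μ W / 2 + μ W / 2 < μ (W ∩ U) + μ (W ∩ Vv) :=
        ENNReal.add_lt_add hlt hgt
      rw [ENNReal.add_halves] at hW2
      exact absurd hsum (not_le.mpr hW2)
  -- arbitrarily small open neighborhoods of 1
  obtain ⟨K, hKc, hK1⟩ := exists_compact_mem_nhds (1 : G)
  have hKfin : μ K ≠ ∞ := hKc.measure_lt_top.ne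
  have iter : ∀ n : ℕ, ∃ W : Set G, IsOpen W ∧ W.Nonempty ∧ μ W ≤ μ K * 2⁻¹ ^ n := by
    intro n
    induction n with
    | zero =>
      exact ⟨interior K, isOpen_interior, ⟨1, mem_interior_iff_mem_nhds.mpr hK1⟩,
        by simpa using measure_mono interior_subset⟩
    | succ n ih =>
      obtain ⟨W, hWo, hWne, hWle⟩ := ih
      obtain ⟨W', hW'o, hW'ne, _, hW'le⟩ := split W hWo hWne
      refine ⟨W', hW'o, hW'ne, ?_⟩
      calc μ W' ≤ μ W / 2 := hW'le
        _ ≤ (μ K * 2⁻¹ ^ n) / 2 := ENNReal.div_le_div_right hWle 2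
        _ = μ K * 2⁻¹ ^ (n + 1) := by
            rw [pow_succ, div_eq_mul_inv, mul_assoc]
  have small : ∀ ε : ℝ≥0∞, ε ≠ 0 → ∃ U : Set G, IsOpen U ∧ (1 : G) ∈ U ∧ μ U < ε := by
    intro ε hε
    have hK1fin : μ K + 1 ≠ ∞ := by simp [hKfin]
    have hd : ε / (μ K + 1) ≠ 0 := by
      simp [ENNReal.div_eq_zero_iff, hε, hK1fin]
    obtain ⟨n, hn⟩ := ENNReal.exists_inv_two_pow_lt hd
    obtain ⟨W, hWo, ⟨w, hw⟩, hWle⟩ := iter n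
    have hμW : μ W < ε := by
      calc μ W ≤ μ K * 2⁻¹ ^ n := hWle
        _ ≤ (μ K + 1) * 2⁻¹ ^ n := by gcongr; exact le_self_add
        _ < (μ K + 1) * (ε / (μ K + 1)) := by
            exact ENNReal.mul_lt_mul_right (by simp) hK1fin hn
        _ = ε := ENNReal.mul_div_cancel (by simp) hK1fin
    refine ⟨(fun z => w * z) ⁻¹' W, hWo.preimage (continuous_mul_left w), by simp [hw], ?_⟩
    rw [measure_preimage_mul]
    exact hμW
  -- choose a decreasing sequence of open neighborhoods of 1 with small measure
  have hUex : ∀ n : ℕ, ∃ U : Set G, IsOpen U ∧ (1 : G) ∈ U ∧ μ U < 2⁻¹ ^ n := by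
    intro n
    refine small _ (pow_ne_zero n ?_)
    simp
  choose U hUo hU1 hUμ using hUex
  set V : ℕ → Set G := fun n => ⋂ k ∈ Finset.range (n + 1), U k with hVdef
  have hVo : ∀ n, IsOpen (V n) := fun n => isOpen_biInter_finset fun k _ => hUo k
  have hV1 : ∀ n, (1 : G) ∈ V n := fun n => mem_iInter₂.mpr fun k _ => hU1 k
  have hVU : ∀ n, V n ⊆ U n := fun n =>
    biInter_subset_of_mem (Finset.self_mem_range_succ n)
  have hVμ : ∀ n, μ (V n) < 2⁻¹ ^ n := fun n => (measure_mono (hVU n)).trans_lt (hUμ n)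
  have hVanti : ∀ {m n : ℕ}, m ≤ n → V n ⊆ V m := by
    intro m n hmn x hx
    refine mem_iInter₂.mpr fun k hk => mem_iInter₂.mp hx k ?_
    rw [Finset.mem_range] at hk ⊢
    omega
  -- the gliding hump function
  set F : G → ℝ≥0∞ := fun x => ∑' n, (V n).indicator 1 x with hFdef
  have hFmeas : Measurable F :=
    Measurable.ennreal_tsum fun n => measurable_one.indicator (hVo n).measurableSet
  set f0 : G → ℝ := fun x => (F x).toReal with hf0def
  have hf0meas : Measurable f0 := hFmeas.ennreal_toReal
  have hFint : ∫⁻ x, F x ∂μ ≠ ∞ := by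
    rw [hFdef]
    simp only
    rw [lintegral_tsum fun n =>
      (measurable_one.indicator (hVo n).measurableSet).aemeasurable]
    have heq : ∑' n, ∫⁻ x, (V n).indicator 1 x ∂μ = ∑' n, μ (V n) :=
      tsum_congr fun n => lintegral_indicator_one (hVo n).measurableSet
    rw [heq]
    have hle : ∑' n, μ (V n) ≤ ∑' n : ℕ, (2 : ℝ≥0∞)⁻¹ ^ n :=
      ENNReal.tsum_le_tsum fun n => (hVμ n).le
    refine ne_top_of_le_ne_top ?_ hle
    rw [ENNReal.tsum_geometric, ENNReal.one_sub_inv_two]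
    simp
  have hint0 : Integrable f0 μ := by
    refine ⟨hf0meas.aestronglyMeasurable, ?_⟩
    have : ∫⁻ x, (‖f0 x‖₊ : ℝ≥0∞) ∂μ ≤ ∫⁻ x, F x ∂μ :=
      lintegral_mono fun x => aux_nnnorm_toReal_le (F x)
    exact lt_of_le_of_lt this hFint.lt_top
  have hintf : Integrable (fun x => (f0 x : ℂ)) μ := hint0.ofReal
  obtain ⟨g, hg⟩ := h _ hintf
  obtain ⟨N, hN⟩ := exists_nat_gt ‖g.toBCF‖
  -- the intersection of all V n is null
  have hI : μ (⋂ n, V n) = 0 := by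
    by_contra hI0
    obtain ⟨n, hn⟩ := ENNReal.exists_inv_two_pow_lt hI0
    exact lt_irrefl _
      (((measure_mono (iInter_subset _ n)).trans_lt (hVμ n)).trans hn)
  have hT : μ {x | ¬ (fun x => (f0 x : ℂ)) x = g x} = 0 := ae_iff.mp hg
  set T : Set G := {x | ¬ (fun x => (f0 x : ℂ)) x = g x} with hTdef
  have hz : μ (T ∪ ⋂ n, V n) = 0 :=
    le_antisymm ((measure_union_le _ _).trans (by rw [hT, hI]; simp)) zero_le
  have hpos : μ (V N \ (T ∪ ⋂ n, V n)) ≠ 0 := by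
    have hposN : 0 < μ (V N) := (hVo N).measure_pos μ ⟨1, hV1 N⟩
    have h2 : μ (V N) ≤ μ (V N \ (T ∪ ⋂ n, V n)) + μ (T ∪ ⋂ n, V n) :=
      (measure_mono (subset_diff_union _ _)).trans (measure_union_le _ _)
    rw [hz, add_zero] at h2
    exact (lt_of_lt_of_le hposN h2).ne'
  obtain ⟨x, hxV, hxc⟩ := nonempty_of_measure_ne_zero hpos
  rw [mem_union, not_or] at hxc
  have hfg : (f0 x : ℂ) = g x := not_not.mp hxc.1
  have hex : ∃ m, x ∉ V m := by
    by_contra hc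
    push_neg at hc
    exact hxc.2 (mem_iInter.mpr hc)
  set m0 := Nat.find hex with hm0def
  have hm0 : x ∉ V m0 := Nat.find_spec hex
  have hmlt : ∀ k < m0, x ∈ V k := fun k hk => not_not.mp (Nat.find_min hex hk)
  have hNm0 : N < m0 := by
    by_contra hle
    push_neg at hle
    exact hm0 (hVanti hle hxV)
  have hFx : F x = (m0 : ℝ≥0∞) := by
    rw [hFdef]
    simp only
    have hzero : ∀ n ∉ Finset.range m0, (V n).indicator (1 : G → ℝ≥0∞) x = 0 := by
      intro n hn
      rw [Finset.mem_range, not_lt] at hn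
      exact indicator_of_notMem (fun hxn => hm0 (hVanti hn hxn)) _
    rw [tsum_eq_sum hzero]
    have hone : ∀ n ∈ Finset.range m0, (V n).indicator (1 : G → ℝ≥0∞) x = 1 :=
      fun n hn => indicator_of_mem (hmlt n (Finset.mem_range.mp hn)) _
    rw [Finset.sum_congr rfl hone]
    simp
  have hf0x : f0 x = (m0 : ℝ) := by
    rw [hf0def]
    simp only
    rw [hFx]; simp
  have hb : ‖g x‖ ≤ ‖g.toBCF‖ := by
    have := g.toBCF.norm_coe_le_norm x
    simpa using this
  have hgx : ‖g x‖ = (m0 : ℝ) := by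
    rw [← hfg, Complex.norm_real, hf0x, Real.norm_of_nonneg (Nat.cast_nonneg m0)]
  have hNm0R : (N : ℝ) < (m0 : ℝ) := Nat.cast_lt.mpr hNm0
  linarith [hN, hb, hgx.symm.le]
end
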